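/- Work in ℂ³ ⊗ ℂ³ and let λ, μ ∈ ℂ with λ ≠ 0 and λ ≠ μ. Then the linear span S_{P,λ,μ} of the Parthasarathy space S_P together with the van der Monde vectors z_λ and z_μ contains infinitely many distinct one-dimensional subspaces spanned by product vectors; in particular, S_{P,λ,μ} is not a quasi-completely entangled subspace. -/

import Mathlib

noncomputable section

abbrev H3 : Type := EuclideanSpace ℂ (Fin 3)
abbrev H33 : Type := EuclideanSpace ℂ (Fin 3 × Fin 3)

/-- standard basis vector of ℂ³ -/
def ket3 (i : Fin 3) : H3 := EuclideanSpace.single i 1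

/-- elementary tensor of two vectors of ℂ³, viewed in ℂ³ ⊗ ℂ³ ≅ ℂ⁹ -/
def tp (u v : H3) : H33 := WithLp.toLp 2 (fun p : Fin 3 × Fin 3 => u p.1 * v p.2)

/-- the set of one-dimensional subspaces of `T` spanned by (nonzero) product vectors -/
def prodLines (T : Submodule ℂ H33) : Set (Submodule ℂ H33) :=
  {L | ∃ ξ : H33, ξ ≠ 0 ∧ ξ ∈ T ∧ (∃ u v : H3, ξ = tp u v) ∧ L = Submodule.span ℂ {ξ}}

/-- the vector |0⟩ + λ|1⟩ + λ²|2⟩ -/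
def vand (lam : ℂ) : H3 := WithLp.toLp 2 (fun i : Fin 3 => lam ^ (i : ℕ))

/-- the van der Monde vector z_λ -/
def zv (lam : ℂ) : H33 := tp (vand lam) (vand lam)

/-- the van der Monde vector z_∞ = |2⟩ ⊗ |2⟩ -/
def zvinf : H33 := tp (ket3 2) (ket3 2)

/-- the span of all van der Monde vectors -/
def FP : Submodule ℂ H33 := Submodule.span ℂ (insert zvinf (Set.range zv))

/-- the Parthasarathy completely entangled subspace of ℂ³ ⊗ ℂ³ -/
def SP33 : Submodule ℂ H33 := FPᗮ

def uvec (lam mu c : ℂ) : H3 := WithLp.toLp 2 (fun i : Fin 3 => lam ^ (i : ℕ) + c * mu ^ (i : ℕ))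
def vvec (lam mu c : ℂ) : H3 := WithLp.toLp 2 (fun i : Fin 3 => lam ^ (i : ℕ) - c * mu ^ (i : ℕ))
def xi (lam mu c : ℂ) : H33 := tp (uvec lam mu c) (vvec lam mu c)

lemma key_zv (lam mu c nu : ℂ) :
    (inner ℂ (zv nu) (xi lam mu c - zv lam + c ^ 2 • zv mu) : ℂ) = 0 := by
  simp only [PiLp.inner_apply, RCLike.inner_apply, xi, tp, zv, vand, uvec, vvec,
    PiLp.sub_apply, PiLp.add_apply, PiLp.smul_apply, smul_eq_mul,
    Fintype.sum_prod_type, Fin.sum_univ_three, Fin.isValue, Fin.val_zero, Fin.val_one, Fin.val_two]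
  ring

lemma key_zvinf (lam mu c : ℂ) :
    (inner ℂ zvinf (xi lam mu c - zv lam + c ^ 2 • zv mu) : ℂ) = 0 := by
  simp only [PiLp.inner_apply, RCLike.inner_apply, xi, tp, zvinf, zv, vand, uvec, vvec, ket3,
    PiLp.sub_apply, PiLp.add_apply, PiLp.smul_apply, smul_eq_mul, EuclideanSpace.single_apply, PiLp.toLp_apply,
    Fintype.sum_prod_type, Fin.sum_univ_three, Fin.isValue, Fin.val_zero, Fin.val_one, Fin.val_two]
  norm_num [Fin.ext_iff]
  ring_nf

lemma eta_mem (lam mu c : ℂ) : xi lam mu c - zv lam + c ^ 2 • zv mu ∈ SP33 := by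
  rw [SP33, Submodule.mem_orthogonal]
  intro y hy
  induction hy using Submodule.span_induction with
  | mem z hz =>
    rcases hz with rfl | ⟨nu, rfl⟩
    · exact key_zvinf lam mu c
    · exact key_zv lam mu c nu
  | zero => simp
  | add y z _ _ ihy ihz => rw [inner_add_left, ihy, ihz, add_zero]
  | smul a y _ ih => rw [inner_smul_left, ih, mul_zero]

lemma xi_mem (lam mu c : ℂ) :
    xi lam mu c ∈ SP33 ⊔ Submodule.span ℂ {zv lam} ⊔ Submodule.span ℂ {zv mu} := by
  have h : xi lam mu c
      = (xi lam mu c - zv lam + c ^ 2 • zv mu) + zv lam + (-(c ^ 2)) • zv mu := by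
    module
  rw [h]
  exact add_mem
    (add_mem (Submodule.mem_sup_left (Submodule.mem_sup_left (eta_mem lam mu c)))
      (Submodule.mem_sup_left (Submodule.mem_sup_right (Submodule.mem_span_singleton_self _))))
    (Submodule.mem_sup_right (Submodule.smul_mem _ _ (Submodule.mem_span_singleton_self _)))

lemma xi_apply00 (lam mu c : ℂ) : xi lam mu c (0, 0) = (1 + c) * (1 - c) := by
  simp [xi, tp, uvec, vvec]

lemma xi_apply10 (lam mu c : ℂ) : xi lam mu c (1, 0) = (lam + c * mu) * (1 - c) := by
  simp [xi, tp, uvec, vvec]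

theorem statement18 (lam mu : ℂ) (h0 : lam ≠ 0) (hne : lam ≠ mu) :
    (prodLines (SP33 ⊔ Submodule.span ℂ {zv lam} ⊔ Submodule.span ℂ {zv mu})).Infinite := by
  apply Set.infinite_of_injective_forall_mem
    (f := fun n : ℕ => Submodule.span ℂ {xi lam mu ((n : ℂ) + 2)})
  · intro n m h
    set c : ℂ := (n : ℂ) + 2 with hc
    set d : ℂ := (m : ℂ) + 2 with hd
    dsimp only at h
    rw [← hc, ← hd] at h
    have hxmem : xi lam mu d ∈ Submodule.span ℂ {xi lam mu c} := by
      rw [h]; exact Submodule.mem_span_singleton_self _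
    obtain ⟨a, ha⟩ := Submodule.mem_span_singleton.mp hxmem
    have e1 : a * ((1 + c) * (1 - c)) = (1 + d) * (1 - d) := by
      have h' := congrArg (fun x : H33 => x (0, 0)) ha
      simp only [PiLp.smul_apply, smul_eq_mul, xi_apply00] at h'
      exact h'
    have e2 : a * ((lam + c * mu) * (1 - c)) = (lam + d * mu) * (1 - d) := by
      have h' := congrArg (fun x : H33 => x (1, 0)) ha
      simp only [PiLp.smul_apply, smul_eq_mul, xi_apply10] at h'
      exact h'
    have key : (1 - d) * ((lam - mu) * (c - d)) = 0 := by
      linear_combination (lam + c * mu) * e1 - (1 + c) * e2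
    have h1d : (1 : ℂ) - d ≠ 0 := by
      intro hd0
      have hm : ((m + 1 : ℕ) : ℂ) = 0 := by push_cast; linear_combination -hd0
      exact Nat.cast_ne_zero.mpr (Nat.succ_ne_zero m) hm
    have hlm : lam - mu ≠ 0 := sub_ne_zero.mpr hne
    have hcd : c - d = 0 := by
      rcases mul_eq_zero.mp key with h' | h'
      · exact absurd h' h1d
      · rcases mul_eq_zero.mp h' with h'' | h''
        · exact absurd h'' hlm
        · exact h''
    have : (n : ℂ) = (m : ℂ) := by linear_combination hcd
    exact_mod_cast this
  · intro n
    refine ⟨xi lam mu ((n : ℂ) + 2), ?_, xi_mem _ _ _, ⟨_, _, rfl⟩, rfl⟩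
    intro h
    have h00 := congrArg (fun x : H33 => x (0, 0)) h
    rw [xi_apply00] at h00
    have hz : ((0 : H33) : Fin 3 × Fin 3 → ℂ) (0, 0) = 0 := rfl
    rw [hz] at h00
    rcases mul_eq_zero.mp h00 with h' | h'
    · have hm : ((n + 3 : ℕ) : ℂ) = 0 := by push_cast; linear_combination h'
      exact Nat.cast_ne_zero.mpr (Nat.succ_ne_zero (n + 2)) hm
    · have hm : ((n + 1 : ℕ) : ℂ) = 0 := by push_cast; linear_combination -h'
      exact Nat.cast_ne_zero.mpr (Nat.succ_ne_zero n) hm
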